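/- arXiv:0802.3832 — 2 statements merged into one kernel-verified Lean document; each statement's English description precedes it below -/
import Mathlib

section
/- For all natural numbers n and all complex b, c with c not equal to any of 0, -1, ..., -(n-1), the terminating hypergeometric sum ∑_{k=0}^{n} ((-n)_k (b)_k)/(k! (c)_k) equals (c-b)_n/(c)_n (Chu–Vandermonde identity), where (z)_k denotes the rising factorial z(z+1)···(z+k-1). -/
/-- The Pochhammer symbol (rising factorial) `(z)_k = ∏_{j=0}^{k-1} (z+j)`. -/
noncomputable def poch (z : ℂ) (k : ℕ) : ℂ := ∏ j ∈ Finset.range k, (z + j)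

lemma poch_zero (z : ℂ) : poch z 0 = 1 := by simp [poch]

lemma poch_succ (z : ℂ) (k : ℕ) : poch z (k+1) = poch z k * (z + k) := by
  simp [poch, Finset.prod_range_succ]

lemma poch_succ' (z : ℂ) (k : ℕ) : poch z (k+1) = z * poch (z+1) k := by
  rw [poch, Finset.prod_range_succ']
  rw [show ((z + ((0:ℕ):ℂ))) = z by push_cast; ring, mul_comm]
  congr 1
  apply Finset.prod_congr rfl
  intro j _
  push_cast; ring

lemma poch_split (c : ℂ) {k n : ℕ} (h : k ≤ n) :
    poch c n = poch c k * poch (c + k) (n - k) := by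
  conv_lhs => rw [show n = k + (n - k) from (Nat.add_sub_cancel' h).symm]
  rw [poch, poch, poch, Finset.prod_range_add]
  congr 1
  apply Finset.prod_congr rfl
  intro j _
  push_cast; ring

lemma poch_neg {k n : ℕ} (h : k ≤ n) :
    poch (-(n:ℂ)) k = (-1)^k * (k.factorial : ℂ) * (n.choose k : ℂ) := by
  induction k with
  | zero => simp [poch]
  | succ k ih =>
    have hk : k ≤ n := le_of_lt h
    rw [poch_succ, ih hk]
    have hcast : ((n.choose (k+1) : ℂ)) * ((k:ℂ)+1) = (n.choose k : ℂ) * ((n:ℂ) - k) := by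
      have hc := congrArg (Nat.cast : ℕ → ℂ) (Nat.choose_succ_right_eq n k)
      push_cast [Nat.cast_sub hk] at hc
      linear_combination hc
    push_cast [Nat.factorial_succ]
    linear_combination ((-1:ℂ))^k * (k.factorial : ℂ) * hcast

lemma key (n : ℕ) : ∀ b c : ℂ,
    ∑ k ∈ Finset.range (n+1), (-1)^k * (n.choose k : ℂ) * poch b k * poch (c+k) ((n:ℕ)-k)
      = poch (c - b) n := by
  induction n with
  | zero => intro b c; simp [poch]
  | succ n ih =>
    intro b c
    have hT : ∑ j ∈ Finset.range (n+2),
        (-1)^j * (n.choose j : ℂ) * poch b j * poch (c+j) (n+1-j)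
        = (c + n) * poch (c-b) n := by
      rw [Finset.sum_range_succ]
      simp only [Nat.choose_succ_self, Nat.cast_zero, mul_zero, zero_mul, add_zero]
      rw [← ih b c, Finset.mul_sum]
      apply Finset.sum_congr rfl
      intro j hj
      have hjn : j ≤ n := Nat.lt_succ_iff.mp (Finset.mem_range.mp hj)
      rw [show n + 1 - j = (n - j) + 1 from by omega, poch_succ]
      rw [Nat.cast_sub hjn]
      ring
    rw [Finset.sum_range_succ']
    have h0 : (-1:ℂ)^0 * ((n+1).choose 0 : ℂ) * poch b 0 * poch (c+((0:ℕ):ℂ)) (n+1-0)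
        = poch c (n+1) := by
      simp [poch_zero]
    have hterm : ∀ k ∈ Finset.range (n+1),
        (-1:ℂ)^(k+1) * (((n+1).choose (k+1)) : ℂ) * poch b (k+1) * poch (c+((k+1:ℕ):ℂ)) (n+1-(k+1))
        = (-(b * ((-1)^k * (n.choose k : ℂ) * poch (b+1) k * poch ((c+1)+k) (n-k))))
          + ((-1:ℂ)^(k+1) * ((n.choose (k+1)) : ℂ) * poch b (k+1) * poch (c+((k+1:ℕ):ℂ)) (n-k)) := by
      intro k hk
      rw [show (n+1).choose (k+1) = n.choose k + n.choose (k+1) from Nat.choose_succ_succ n k]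
      rw [show n+1-(k+1) = n - k from by omega]
      rw [poch_succ' b k]
      have : poch (c + ((k+1:ℕ):ℂ)) (n-k) = poch ((c+1)+k) (n-k) := by
        push_cast; ring_nf
      rw [this]
      push_cast
      ring
    rw [Finset.sum_congr rfl hterm, Finset.sum_add_distrib]
    have hA : ∑ k ∈ Finset.range (n+1),
        -(b * ((-1)^k * (n.choose k : ℂ) * poch (b+1) k * poch ((c+1)+k) (n-k)))
        = -(b * poch (c-b) n) := by
      rw [Finset.sum_neg_distrib, ← Finset.mul_sum]
      have hih := ih (b+1) (c+1)
      rw [show c + 1 - (b+1) = c - b from by ring] at hih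
      rw [hih]
    have hB : ∑ j ∈ Finset.range (n+2),
        (-1:ℂ)^j * (n.choose j : ℂ) * poch b j * poch (c+j) (n+1-j)
        = (∑ k ∈ Finset.range (n+1),
            (-1:ℂ)^(k+1) * ((n.choose (k+1)) : ℂ) * poch b (k+1) * poch (c+((k+1:ℕ):ℂ)) (n-k))
          + poch c (n+1) := by
      rw [Finset.sum_range_succ']
      congr 1
      · apply Finset.sum_congr rfl
        intro k hk
        rw [show n+1-(k+1) = n - k from by omega]
      · simp [poch_zero]
    have hsumB : ∑ k ∈ Finset.range (n+1),
        (-1:ℂ)^(k+1) * ((n.choose (k+1)) : ℂ) * poch b (k+1) * poch (c+((k+1:ℕ):ℂ)) (n-k)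
        = (c + n) * poch (c-b) n - poch c (n+1) := by
      rw [hB] at hT
      linear_combination hT
    rw [hA, hsumB, h0, poch_succ (c-b) n]
    ring

/-- Chu–Vandermonde: `F(-n, b, c; 1) = (c-b)_n / (c)_n`. -/
theorem chu_vandermonde (n : ℕ) (b c : ℂ)
    (hc : ∀ j : ℕ, j < n → c + (j : ℂ) ≠ 0) :
    ∑ k ∈ Finset.range (n + 1),
        poch (-(n : ℂ)) k * poch b k / ((k.factorial : ℂ) * poch c k)
      = poch (c - b) n / poch c n := by
  have hpoch_ne : ∀ m : ℕ, m ≤ n → poch c m ≠ 0 := by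
    intro m hm
    rw [poch]
    apply Finset.prod_ne_zero_iff.mpr
    intro j hj
    exact hc j (lt_of_lt_of_le (Finset.mem_range.mp hj) hm)
  have htail_ne : ∀ k : ℕ, k ≤ n → poch (c + k) (n - k) ≠ 0 := by
    intro k hk
    rw [poch]
    apply Finset.prod_ne_zero_iff.mpr
    intro j hj
    have hjlt : j < n - k := Finset.mem_range.mp hj
    have heq : (c + k) + j = c + ((k + j : ℕ) : ℂ) := by push_cast; ring
    rw [heq]
    exact hc (k + j) (by omega)
  rw [← key n b c, Finset.sum_div]
  apply Finset.sum_congr rfl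
  intro k hk
  have hkn : k ≤ n := Nat.lt_succ_iff.mp (Finset.mem_range.mp hk)
  rw [poch_neg hkn, poch_split c hkn]
  have h1 := hpoch_ne k hkn
  have h2 := htail_ne k hkn
  have h3 : (k.factorial : ℂ) ≠ 0 := Nat.cast_ne_zero.mpr k.factorial_ne_zero
  field_simp
end

section
/- Vanishing of odd-order terminating Kummer sums: for every natural number n and complex b with no denominator vanishing, ∑_{k=0}^{2n+1} ((-(2n+1))_k (b)_k)/(k! (-(2n+1)+1-b)_k) (-1)^k = 0; that is, the terminating 2F1 at -1 with upper parameters -(2n+1), b and lower parameter -2n-b vanishes. -/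
lemma poch_add (z : ℂ) (a c : ℕ) : poch z (a + c) = poch z a * poch (z + a) c := by
  unfold poch
  rw [Finset.prod_range_add]
  congr 1
  apply Finset.prod_congr rfl
  intro j _
  push_cast
  ring

lemma poch_reflect (z : ℂ) (t : ℕ) :
    poch z t = (-1) ^ t * poch (1 - t - z) t := by
  unfold poch
  rw [← Finset.prod_range_reflect (fun j => z + (j : ℂ)) t]
  rw [show ((-1 : ℂ)) ^ t = ∏ _j ∈ Finset.range t, (-1 : ℂ) by simp,
    ← Finset.prod_mul_distrib]
  apply Finset.prod_congr rfl
  intro j hj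
  have hj' : j < t := Finset.mem_range.mp hj
  have hcast : ((t - 1 - j : ℕ) : ℂ) = (t : ℂ) - 1 - j := by
    have : t - 1 - j = t - (1 + j) := by omega
    rw [this, Nat.cast_sub (by omega)]
    push_cast
    ring
  simp only [hcast]
  ring

lemma poch_one_eq (t : ℕ) : poch 1 t = (t.factorial : ℂ) := by
  induction t with
  | zero => simp [poch]
  | succ s ih =>
    unfold poch at *
    rw [Finset.prod_range_succ, ih, Nat.factorial_succ]
    push_cast
    ring

lemma poch_neg_nat (t : ℕ) : poch (-(t : ℂ)) t = (-1) ^ t * (t.factorial : ℂ) := by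
  rw [poch_reflect]
  congr 1
  rw [show (1 : ℂ) - t - -(t : ℂ) = 1 by ring]
  exact poch_one_eq t

lemma key_reflect (n : ℕ) (b : ℂ)
    (hden : ∀ k : ℕ, k ≤ 2 * n + 1 → poch (-(2 * n : ℂ) - b) k ≠ 0)
    (k : ℕ) (hk : k ≤ 2 * n + 1) :
    poch (-(2 * n + 1 : ℂ)) (2 * n + 1 - k) * poch b (2 * n + 1 - k)
        / (((2 * n + 1 - k).factorial : ℂ) * poch (-(2 * n : ℂ) - b) (2 * n + 1 - k))
        * (-1 : ℂ) ^ (2 * n + 1 - k)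
      = - (poch (-(2 * n + 1 : ℂ)) k * poch b k
        / ((k.factorial : ℂ) * poch (-(2 * n : ℂ) - b) k) * (-1 : ℂ) ^ k) := by
  set j := 2 * n + 1 - k with hj
  have hjk : j + k = 2 * n + 1 := by omega
  have hkj : k + j = 2 * n + 1 := by omega
  have hcastj : ((j : ℕ) : ℂ) = 2 * (n : ℂ) + 1 - k := by
    rw [hj, Nat.cast_sub hk]; push_cast; ring
  -- abbreviations
  set a := poch (-(2 * n + 1 : ℂ)) k
  set a' := poch (-(2 * n + 1 : ℂ)) j
  set β := poch b k
  set β' := poch b j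
  set γ := poch (-(2 * n : ℂ) - b) k
  set γ' := poch (-(2 * n : ℂ) - b) j
  set f := (k.factorial : ℂ)
  set f' := (j.factorial : ℂ)
  set s := ((-1 : ℂ)) ^ k with hsdef
  set s' := ((-1 : ℂ)) ^ j with hs'def
  have hs : s * s = 1 := by
    rw [hsdef, ← pow_add]; exact Even.neg_one_pow ⟨k, rfl⟩
  have hs' : s' * s' = 1 := by
    rw [hs'def, ← pow_add]; exact Even.neg_one_pow ⟨j, rfl⟩
  -- E1
  have hA1 : poch (-(2 * n + 1 : ℂ)) (2 * n + 1) = a * (s' * f') := by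
    rw [← hkj, poch_add]
    congr 1
    rw [show -(2 * n + 1 : ℂ) + k = -((j : ℕ) : ℂ) by rw [hcastj]; ring]
    exact poch_neg_nat j
  have hA2 : poch (-(2 * n + 1 : ℂ)) (2 * n + 1) = a' * (s * f) := by
    rw [← hjk, poch_add]
    congr 1
    rw [show -(2 * n + 1 : ℂ) + j = -((k : ℕ) : ℂ) by rw [hcastj]; ring]
    exact poch_neg_nat k
  have E1 : a' * (s * f) = a * (s' * f') := hA2.symm.trans hA1
  -- E2
  have E2 : poch b (2 * n + 1) = β' * (s * γ) := by
    rw [← hjk, poch_add]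
    congr 1
    rw [poch_reflect (b + j) k]
    congr 2
    rw [hcastj]; ring
  -- E3
  have E3 : poch (-(2 * n : ℂ) - b) (2 * n + 1) = γ' * (s * β) := by
    rw [← hjk, poch_add]
    congr 1
    rw [poch_reflect (-(2 * n : ℂ) - b + j) k]
    congr 2
    rw [hcastj]; ring
  -- E4
  have E4 : poch (-(2 * n : ℂ) - b) (2 * n + 1) = - poch b (2 * n + 1) := by
    rw [poch_reflect (-(2 * n : ℂ) - b) (2 * n + 1)]
    rw [show ((1 : ℂ) - (2 * n + 1 : ℕ) - (-(2 * n : ℂ) - b)) = b by push_cast; ring]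
    rw [show ((-1 : ℂ)) ^ (2 * n + 1) = -1 from Odd.neg_one_pow ⟨n, by ring⟩]
    ring
  have E8 : β' * (s * γ) = -(γ' * (s * β)) := by linear_combination E4 - E2 - E3
  have E7 : β' * γ = -(γ' * β) := by
    linear_combination s * E8 - (β' * γ + γ' * β) * hs
  -- nonvanishing
  have hγ : γ ≠ 0 := hden k hk
  have hγ' : γ' ≠ 0 := hden j (by omega)
  have hf : f ≠ 0 := Nat.cast_ne_zero.mpr k.factorial_ne_zero
  have hf' : f' ≠ 0 := Nat.cast_ne_zero.mpr j.factorial_ne_zero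
  field_simp
  linear_combination (s * s' * β' * γ) * E1 + (s * a * f') * E7
    + (s * a * β' * γ * f') * hs' - (a' * β' * s' * f * γ) * hs

/-- Odd-order terminating Kummer sums vanish: `F(-(2n+1), b, -2n-b; -1) = 0`. -/
theorem odd_kummer_vanishes (n : ℕ) (b : ℂ)
    (hden : ∀ k : ℕ, k ≤ 2 * n + 1 → poch (-(2 * n : ℂ) - b) k ≠ 0) :
    ∑ k ∈ Finset.range (2 * n + 2),
        poch (-(2 * n + 1 : ℂ)) k * poch b k
          / ((k.factorial : ℂ) * poch (-(2 * n : ℂ) - b) k) * (-1 : ℂ) ^ k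
      = 0 := by
  set T : ℕ → ℂ := fun k =>
    poch (-(2 * n + 1 : ℂ)) k * poch b k
      / ((k.factorial : ℂ) * poch (-(2 * n : ℂ) - b) k) * (-1 : ℂ) ^ k with hT
  have hrefl := Finset.sum_range_reflect T (2 * n + 2)
  have hneg : ∀ k ∈ Finset.range (2 * n + 2), T (2 * n + 2 - 1 - k) = - T k := by
    intro k hkmem
    have hk : k ≤ 2 * n + 1 := by
      have := Finset.mem_range.mp hkmem; omega
    have h1 : 2 * n + 2 - 1 - k = 2 * n + 1 - k := by omega
    rw [h1, hT]
    exact key_reflect n b hden k hk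
  have hSneg : ∑ k ∈ Finset.range (2 * n + 2), T k
      = - ∑ k ∈ Finset.range (2 * n + 2), T k := by
    conv_lhs => rw [← hrefl]
    rw [Finset.sum_congr rfl hneg, Finset.sum_neg_distrib]
  have h2 : (2 : ℂ) * ∑ k ∈ Finset.range (2 * n + 2), T k = 0 := by linear_combination hSneg
  exact (mul_eq_zero.mp h2).resolve_left two_ne_zero
end
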